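/- Suppose π is a probability tensor corresponding to a weakly hierarchical log-linear model θ, and assume C_θ^{(j)} ≠ ∅ for all j ∈ V. For a collection H = (H_1,…,H_p) of subsets H_j ⊆ I_j, say H ∈ ℋ if for every (E, i_E) with |E| ≥ 2 and θ_E(i_E) ≠ 0 there exists j ∈ E with i_j ∈ H_j. Then rnk⁺_P(π) ≤ min over H ∈ ℋ of ∏_{j∈V} ( |H_j| + 1 ). -/

import Mathlib

/-- A nonnegative PARAFAC decomposition with `m` terms. -/
def IsParafacDecomp {p : ℕ} {d : Fin p → ℕ}
    (M : ((j : Fin p) → Fin (d j)) → ℝ) (m : ℕ) : Prop :=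
  ∃ lam : Fin m → (j : Fin p) → Fin (d j) → ℝ,
    (∀ h j c, 0 ≤ lam h j c) ∧
    ∀ i : (j : Fin p) → Fin (d j), M i = ∑ h : Fin m, ∏ j : Fin p, lam h j (i j)

/-- The nonnegative PARAFAC rank. -/
noncomputable def parafacRank {p : ℕ} {d : Fin p → ℕ}
    (M : ((j : Fin p) → Fin (d j)) → ℝ) : ℕ :=
  sInf {m | IsParafacDecomp M m}

/-- The probability tensor of the log-linear model `θ`:
`π i = exp (∑_{E ⊆ V} θ_E(i_E))`, normalized so that the entries sum to one. -/
noncomputable def loglinTensor {p : ℕ} {d : Fin p → ℕ}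
    (θ : Finset (Fin p) → ((j : Fin p) → Fin (d j)) → ℝ) :
    ((j : Fin p) → Fin (d j)) → ℝ :=
  fun i => Real.exp (∑ E : Finset (Fin p), θ E i) /
    ∑ i' : (j : Fin p) → Fin (d j), Real.exp (∑ E : Finset (Fin p), θ E i')


namespace ParafacAux

variable {p : ℕ} {d : Fin p → ℕ}

/-- The log-potential of a log-linear model. -/
noncomputable def L (θ : Finset (Fin p) → ((j : Fin p) → Fin (d j)) → ℝ)
    (i : (j : Fin p) → Fin (d j)) : ℝ :=
  ∑ E : Finset (Fin p), θ E i

/-- A cell `i` matches a pattern `h` if `i j = h j` whenever `h j` is specified,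
and `i j ∉ H j` whenever `h j = none`. -/
def Matches (H : (j : Fin p) → Finset (Fin (d j)))
    (h : (j : Fin p) → Option {x // x ∈ H j}) (i : (j : Fin p) → Fin (d j)) : Prop :=
  ∀ j : Fin p, (h j).elim (i j ∉ H j) (fun c => i j = c.1)

lemma theta_zero (θ : Finset (Fin p) → ((j : Fin p) → Fin (d j)) → ℝ)
    (hwh : ∀ (E F : Finset (Fin p)) (i i' : (j : Fin p) → Fin (d j)),
      E ⊆ F → θ E i = 0 → (∀ j ∈ E, i' j = i j) → θ F i' = 0)
    (H : (j : Fin p) → Finset (Fin (d j)))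
    (hH : ∀ (E : Finset (Fin p)) (i : (j : Fin p) → Fin (d j)),
      2 ≤ E.card → θ E i ≠ 0 → ∃ j ∈ E, i j ∈ H j)
    (h : (j : Fin p) → Option {x // x ∈ H j}) (x : (j : Fin p) → Fin (d j))
    (hx : Matches H h x) (E : Finset (Fin p)) (j1 j2 : Fin p)
    (hj1 : j1 ∈ E) (hj2 : j2 ∈ E) (hne : j1 ≠ j2)
    (hf1 : h j1 = none) (hf2 : h j2 = none) :
    θ E x = 0 := by
  have h1 : x j1 ∉ H j1 := by simpa [hf1] using hx j1
  have h2 : x j2 ∉ H j2 := by simpa [hf2] using hx j2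
  by_cases h0 : θ {j1, j2} x = 0
  · exact hwh {j1, j2} E x x
      (Finset.insert_subset hj1 (Finset.singleton_subset_iff.2 hj2)) h0 (fun _ _ => rfl)
  · obtain ⟨j, hjm, hjH⟩ := hH {j1, j2} x (by rw [Finset.card_pair hne]) h0
    rcases Finset.mem_insert.1 hjm with rfl | hjm'
    · exact absurd hjH h1
    · rw [Finset.mem_singleton.1 hjm'] at hjH
      exact absurd hjH h2

lemma keyE (θ : Finset (Fin p) → ((j : Fin p) → Fin (d j)) → ℝ)
    (hdep : ∀ (E : Finset (Fin p)) (i i' : (j : Fin p) → Fin (d j)),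
      (∀ j ∈ E, i j = i' j) → θ E i = θ E i')
    (hwh : ∀ (E F : Finset (Fin p)) (i i' : (j : Fin p) → Fin (d j)),
      E ⊆ F → θ E i = 0 → (∀ j ∈ E, i' j = i j) → θ F i' = 0)
    (H : (j : Fin p) → Finset (Fin (d j)))
    (hH : ∀ (E : Finset (Fin p)) (i : (j : Fin p) → Fin (d j)),
      2 ≤ E.card → θ E i ≠ 0 → ∃ j ∈ E, i j ∈ H j)
    (h : (j : Fin p) → Option {x // x ∈ H j}) (ref i : (j : Fin p) → Fin (d j))
    (href : Matches H h ref) (hi : Matches H h i) (E : Finset (Fin p)) :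
    θ E i - θ E ref = ∑ j : Fin p, (θ E (Function.update ref j (i j)) - θ E ref) := by
  classical
  set F := E.filter (fun j => h j = none) with hF
  have hzero : ∀ j : Fin p, j ∉ F → θ E (Function.update ref j (i j)) - θ E ref = 0 := by
    intro j hj
    by_cases hjE : j ∈ E
    · have hjn : h j ≠ none := fun hn => hj (Finset.mem_filter.2 ⟨hjE, hn⟩)
      obtain ⟨c, hc⟩ := Option.ne_none_iff_exists'.1 hjn
      have hic : i j = c.1 := by simpa [hc] using hi j
      have hrc : ref j = c.1 := by simpa [hc] using href j
      have hupd : Function.update ref j (i j) = ref := by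
        rw [hic, ← hrc]; exact Function.update_eq_self j ref
      rw [hupd]; ring
    · have : θ E (Function.update ref j (i j)) = θ E ref :=
        hdep E _ ref (fun k hk => Function.update_of_ne (by rintro rfl; exact hjE hk) _ _)
      rw [this]; ring
  rw [← Finset.sum_subset (Finset.subset_univ F) (fun j _ hj => hzero j hj)]
  by_cases h2 : 2 ≤ F.card
  · obtain ⟨j1, hj1, j2, hj2, hne12⟩ := Finset.one_lt_card.1 h2
    have hj1E : j1 ∈ E := (Finset.mem_filter.1 hj1).1
    have hj1n : h j1 = none := (Finset.mem_filter.1 hj1).2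
    have hj2E : j2 ∈ E := (Finset.mem_filter.1 hj2).1
    have hj2n : h j2 = none := (Finset.mem_filter.1 hj2).2
    have hti : θ E i = 0 := theta_zero θ hwh H hH h i hi E j1 j2 hj1E hj2E hne12 hj1n hj2n
    have htr : θ E ref = 0 := theta_zero θ hwh H hH h ref href E j1 j2 hj1E hj2E hne12 hj1n hj2n
    have htu : ∀ j ∈ F, θ E (Function.update ref j (i j)) = 0 := by
      intro j hj
      have hjn : h j = none := (Finset.mem_filter.1 hj).2
      have hupd : Matches H h (Function.update ref j (i j)) := by
        intro k
        rcases eq_or_ne k j with rfl | hkj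
        · rw [hjn]
          simpa [hjn] using hi k
        · have heq : Function.update ref j (i j) k = ref k := Function.update_of_ne hkj _ _
          rw [heq]
          exact href k
      exact theta_zero θ hwh H hH h _ hupd E j1 j2 hj1E hj2E hne12 hj1n hj2n
    rw [hti, htr, Finset.sum_eq_zero (fun j hj => by simp [htu j hj])]
    ring
  · rcases Nat.le_one_iff_eq_zero_or_eq_one.1 (Nat.lt_succ_iff.1 (not_le.1 h2)) with h0 | h1
    · rw [Finset.card_eq_zero.1 h0, Finset.sum_empty]
      have hagree : ∀ k ∈ E, i k = ref k := by
        intro k hk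
        have hkF : k ∉ F := by rw [Finset.card_eq_zero.1 h0]; exact Finset.notMem_empty k
        have hkn : h k ≠ none := fun hn => hkF (Finset.mem_filter.2 ⟨hk, hn⟩)
        obtain ⟨c, hc⟩ := Option.ne_none_iff_exists'.1 hkn
        have hic : i k = c.1 := by simpa [hc] using hi k
        have hrc : ref k = c.1 := by simpa [hc] using href k
        rw [hic, hrc]
      rw [hdep E i ref hagree]; ring
    · obtain ⟨j0, hj0⟩ := Finset.card_eq_one.1 h1
      rw [hj0, Finset.sum_singleton]
      have hj0F : j0 ∈ F := hj0 ▸ Finset.mem_singleton_self j0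
      have hagree : ∀ k ∈ E, i k = Function.update ref j0 (i j0) k := by
        intro k hk
        rcases eq_or_ne k j0 with rfl | hk0
        · simp
        · rw [Function.update_of_ne hk0]
          have hkF : k ∉ F := by rw [hj0]; simpa using hk0
          have hkn : h k ≠ none := fun hn => hkF (Finset.mem_filter.2 ⟨hk, hn⟩)
          obtain ⟨c, hc⟩ := Option.ne_none_iff_exists'.1 hkn
          have hic : i k = c.1 := by simpa [hc] using hi k
          have hrc : ref k = c.1 := by simpa [hc] using href k
          rw [hic, hrc]
      rw [hdep E i _ hagree]

lemma key (θ : Finset (Fin p) → ((j : Fin p) → Fin (d j)) → ℝ)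
    (hdep : ∀ (E : Finset (Fin p)) (i i' : (j : Fin p) → Fin (d j)),
      (∀ j ∈ E, i j = i' j) → θ E i = θ E i')
    (hwh : ∀ (E F : Finset (Fin p)) (i i' : (j : Fin p) → Fin (d j)),
      E ⊆ F → θ E i = 0 → (∀ j ∈ E, i' j = i j) → θ F i' = 0)
    (H : (j : Fin p) → Finset (Fin (d j)))
    (hH : ∀ (E : Finset (Fin p)) (i : (j : Fin p) → Fin (d j)),
      2 ≤ E.card → θ E i ≠ 0 → ∃ j ∈ E, i j ∈ H j)
    (h : (j : Fin p) → Option {x // x ∈ H j}) (ref i : (j : Fin p) → Fin (d j))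
    (href : Matches H h ref) (hi : Matches H h i) :
    L θ i = L θ ref + ∑ j : Fin p, (L θ (Function.update ref j (i j)) - L θ ref) := by
  have hstep : L θ i - L θ ref
      = ∑ j : Fin p, (L θ (Function.update ref j (i j)) - L θ ref) := by
    unfold L
    rw [← Finset.sum_sub_distrib]
    calc ∑ E : Finset (Fin p), (θ E i - θ E ref)
        = ∑ E : Finset (Fin p), ∑ j : Fin p, (θ E (Function.update ref j (i j)) - θ E ref) :=
          Finset.sum_congr rfl (fun E _ => keyE θ hdep hwh H hH h ref i href hi E)
      _ = ∑ j : Fin p, ∑ E : Finset (Fin p), (θ E (Function.update ref j (i j)) - θ E ref) :=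
          Finset.sum_comm
      _ = ∑ j : Fin p, ((∑ E : Finset (Fin p), θ E (Function.update ref j (i j)))
            - ∑ E : Finset (Fin p), θ E ref) :=
          Finset.sum_congr rfl (fun j _ => Finset.sum_sub_distrib _ _)
  linarith [hstep]

end ParafacAux

/-- First part of Theorem 2: if `π` is the probability tensor of a weakly hierarchical
log-linear model `θ` in which every variable shares a nonzero two-way interaction
(`C_θ^{(j)} ≠ ∅` for all `j`), then for every collection `H = (H_1,…,H_p)` of level sets
covering all nonzero interactions of order at least two (`H ∈ ℋ`), the nonnegative
PARAFAC rank of `π` is at most `∏_{j ∈ V} (|H_j| + 1)`.  (Hence the rank is at most the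
minimum of this bound over `H ∈ ℋ`.) -/
theorem parafacRank_le_cover_bound {p : ℕ} {d : Fin p → ℕ}
    (θ : Finset (Fin p) → ((j : Fin p) → Fin (d j)) → ℝ)
    (hdep : ∀ (E : Finset (Fin p)) (i i' : (j : Fin p) → Fin (d j)),
      (∀ j ∈ E, i j = i' j) → θ E i = θ E i')
    (hwh : ∀ (E F : Finset (Fin p)) (i i' : (j : Fin p) → Fin (d j)),
      E ⊆ F → θ E i = 0 → (∀ j ∈ E, i' j = i j) → θ F i' = 0)
    (hC : ∀ j : Fin p, ∃ j' : Fin p, j' ≠ j ∧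
      ∃ x : (k : Fin p) → Fin (d k), θ {j, j'} x ≠ 0)
    (H : (j : Fin p) → Finset (Fin (d j)))
    (hH : ∀ (E : Finset (Fin p)) (i : (j : Fin p) → Fin (d j)),
      2 ≤ E.card → θ E i ≠ 0 → ∃ j ∈ E, i j ∈ H j) :
    parafacRank (loglinTensor θ) ≤ ∏ j : Fin p, ((H j).card + 1) := by
  classical
  apply Nat.sInf_le
  show IsParafacDecomp (loglinTensor θ) (∏ j : Fin p, ((H j).card + 1))
  by_cases hcell : Nonempty ((j : Fin p) → Fin (d j))
  swap
  · exact ⟨fun _ _ _ => 0, fun _ _ _ => le_rfl, fun i => absurd ⟨i⟩ hcell⟩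
  obtain ⟨i₀⟩ := hcell
  rcases Nat.eq_zero_or_pos p with hp0 | hp
  · subst hp0
    refine ⟨fun _ _ _ => 1, fun _ _ _ => zero_le_one, fun i => ?_⟩
    have hid : (default : (j : Fin 0) → Fin (d j)) = i := funext fun j => j.elim0
    simp [loglinTensor, hid, Real.exp_ne_zero]
  -- main case: p > 0
  set Z : ℝ := ∑ i' : (j : Fin p) → Fin (d j), Real.exp (ParafacAux.L θ i') with hZdef
  have hZpos : 0 < Z :=
    Finset.sum_pos (fun _ _ => Real.exp_pos _) ⟨i₀, Finset.mem_univ i₀⟩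
  set j₀ : Fin p := ⟨0, hp⟩ with hj₀def
  set ref : ((j : Fin p) → Option {x // x ∈ H j}) → ((j : Fin p) → Fin (d j)) :=
    fun h => if hx : ∃ x, ParafacAux.Matches H h x then hx.choose else i₀ with href_def
  have href : ∀ h, (∃ x, ParafacAux.Matches H h x) → ParafacAux.Matches H h (ref h) := by
    intro h hx
    simp only [href_def, dif_pos hx]
    exact hx.choose_spec
  set lam' : ((j : Fin p) → Option {x // x ∈ H j}) → (j : Fin p) → Fin (d j) → ℝ :=
    fun h j c =>
      (if (h j).elim (c ∉ H j) (fun c' => c = c'.1) then 1 else 0) *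
        Real.exp (ParafacAux.L θ (Function.update (ref h) j c) - ParafacAux.L θ (ref h)) *
        (if j = j₀ then Real.exp (ParafacAux.L θ (ref h)) / Z else 1) with hlam'
  set σ : ((j : Fin p) → Fin (d j)) → ((j : Fin p) → Option {x // x ∈ H j}) :=
    fun i j => if hc : i j ∈ H j then some ⟨i j, hc⟩ else none with hσ
  have hσm : ∀ i, ParafacAux.Matches H (σ i) i := by
    intro i j
    by_cases hc : i j ∈ H j
    · simp [hσ, hc]
    · simp [hσ, hc]
  have hmatch_eq : ∀ (i : (j : Fin p) → Fin (d j)) (h : (j : Fin p) → Option {x // x ∈ H j}),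
      (∀ j : Fin p, (h j).elim (i j ∉ H j) (fun c' => i j = c'.1)) → h = σ i := by
    intro i h hm
    funext j
    cases hhj : h j with
    | none =>
      have hni : i j ∉ H j := by simpa [hhj] using hm j
      simp [hσ, hni]
    | some c =>
      have hic : i j = c.1 := by simpa [hhj] using hm j
      have hmem : i j ∈ H j := hic ▸ c.2
      simp only [hσ, dif_pos hmem]
      exact congrArg some (Subtype.ext hic.symm)
  have hnn : ∀ h j c, 0 ≤ lam' h j c := by
    intro h j c
    simp only [hlam']
    apply mul_nonneg (mul_nonneg ?_ (Real.exp_pos _).le)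
    · split
      · positivity
      · norm_num
    · split <;> norm_num
  have hmain : ∀ i : (j : Fin p) → Fin (d j),
      loglinTensor θ i
        = ∑ h : (j : Fin p) → Option {x // x ∈ H j}, ∏ j : Fin p, lam' h j (i j) := by
    intro i
    have hsum : (∑ h : (j : Fin p) → Option {x // x ∈ H j}, ∏ j : Fin p, lam' h j (i j))
        = ∏ j : Fin p, lam' (σ i) j (i j) := by
      apply Finset.sum_eq_single (σ i)
      · intro h _ hne
        have hnot : ¬ ∀ j : Fin p, (h j).elim (i j ∉ H j) (fun c' => i j = c'.1) :=
          fun hall => hne (hmatch_eq i h hall)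
        obtain ⟨j, hj⟩ := not_forall.1 hnot
        apply Finset.prod_eq_zero (Finset.mem_univ j)
        simp only [hlam', if_neg hj, zero_mul]
      · intro habs
        exact absurd (Finset.mem_univ _) habs
    rw [hsum]
    have hm : ParafacAux.Matches H (σ i) i := hσm i
    have hr : ParafacAux.Matches H (σ i) (ref (σ i)) := href _ ⟨i, hm⟩
    have hprod : ∀ j : Fin p, lam' (σ i) j (i j) =
        Real.exp (ParafacAux.L θ (Function.update (ref (σ i)) j (i j))
          - ParafacAux.L θ (ref (σ i))) *
        (if j = j₀ then Real.exp (ParafacAux.L θ (ref (σ i))) / Z else 1) := by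
      intro j
      simp only [hlam', if_pos (hm j), one_mul]
    rw [Finset.prod_congr rfl (fun j _ => hprod j), Finset.prod_mul_distrib,
      ← Real.exp_sum,
      Finset.prod_ite_eq' Finset.univ j₀
        (fun _ => Real.exp (ParafacAux.L θ (ref (σ i))) / Z),
      if_pos (Finset.mem_univ j₀)]
    have hkey := ParafacAux.key θ hdep hwh H hH (σ i) (ref (σ i)) i hr hm
    have hfin : Real.exp (∑ j : Fin p, (ParafacAux.L θ (Function.update (ref (σ i)) j (i j))
          - ParafacAux.L θ (ref (σ i)))) *
        (Real.exp (ParafacAux.L θ (ref (σ i))) / Z) = Real.exp (ParafacAux.L θ i) / Z := by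
      rw [hkey, Real.exp_add]
      ring
    rw [hfin]
    rfl
  have hcard : Fintype.card ((j : Fin p) → Option {x // x ∈ H j})
      = ∏ j : Fin p, ((H j).card + 1) := by
    rw [Fintype.card_pi]
    exact Finset.prod_congr rfl (fun j _ => by rw [Fintype.card_option, Fintype.card_coe])
  let e : Fin (∏ j : Fin p, ((H j).card + 1)) ≃ ((j : Fin p) → Option {x // x ∈ H j}) :=
    (Fintype.equivFinOfCardEq hcard).symm
  refine ⟨fun t j c => lam' (e t) j c, fun t j c => hnn _ _ _, fun i => ?_⟩
  rw [hmain i]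
  exact (Equiv.sum_comp e (fun h => ∏ j : Fin p, lam' h j (i j))).symm
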